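/- For x ∈ ℝ⁵ with |x| > 0, the subtracted convolution R̂_0(x) = ∫_{ℝ⁵} (R_0(z))² (R_0(z+x) − R_0(x)) dz, where the integral is over |z| ≥ |x| appropriately interpreted via spherical averaging, equals −1/((16π²)²|x|⁴). Equivalently: (1/(8π²)³) ∫_{|z| ≥ |x|} (|z|^{−9} − |x|^{−3}|z|^{−6}) dz = −1/((16π²)²|x|⁴). -/

import Mathlib

open MeasureTheory Real Set

noncomputable def R0 (x : EuclideanSpace ℝ (Fin 5)) : ℝ := 1 / (8 * π ^ 2 * ‖x‖ ^ 3)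

theorem gamma72 : Real.Gamma (7/2) = 15 * Real.sqrt π / 8 := by
  have h12 : Real.Gamma (1/2) = Real.sqrt π := Real.Gamma_one_half_eq
  have h32 : Real.Gamma (3/2) = (1/2) * Real.Gamma (1/2) := by
    have := Real.Gamma_add_one (s := 1/2) (by norm_num)
    norm_num at this ⊢; linarith
  have h52 : Real.Gamma (5/2) = (3/2) * Real.Gamma (3/2) := by
    have := Real.Gamma_add_one (s := 3/2) (by norm_num)
    norm_num at this ⊢; linarith
  have h72 : Real.Gamma (7/2) = (5/2) * Real.Gamma (5/2) := by
    have := Real.Gamma_add_one (s := 5/2) (by norm_num)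
    norm_num at this ⊢; linarith
  rw [h72, h52, h32, h12]; ring

theorem ballvol : (volume (Metric.ball (0 : EuclideanSpace ℝ (Fin 5)) 1)).toReal = 8 * π ^ 2 / 15 := by
  rw [EuclideanSpace.volume_ball]
  rw [show ((Fintype.card (Fin 5) : ℝ) / 2 + 1 : ℝ) = 7/2 by simp; norm_num]
  rw [gamma72]
  have h4 : Real.sqrt π ^ 4 = π ^ 2 := by
    rw [show (4:ℕ) = 2*2 from rfl, pow_mul, Real.sq_sqrt pi_pos.le]
  have hsπ : (0:ℝ) < Real.sqrt π := Real.sqrt_pos.mpr pi_pos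
  have h5 : Real.sqrt π ^ Fintype.card (Fin 5) / (15 * Real.sqrt π / 8)
      = 8 * π ^ 2 / 15 := by
    have h : Real.sqrt π ^ Fintype.card (Fin 5) = π ^ 2 * Real.sqrt π := by
      simp only [Fintype.card_fin]
      rw [show (5:ℕ) = 4+1 from rfl, pow_succ, h4]
    rw [h]; field_simp
  rw [h5]
  simp [ENNReal.toReal_ofReal (by positivity : (0:ℝ) ≤ 8 * π ^ 2 / 15)]

/-- The subtracted convolution `R̂₀(x) = ∫ (R₀(z))² (R₀(z+x) − R₀(x)) dz`, interpreted via
spherical averaging (the spherical average of `R₀(z+x)` over `{|z|=r}` is `R₀(x)` for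
`|x| > r` and `1/(8π²r³) = R₀(z)` for `|x| ≤ r`), equals
`∫_{|z| ≥ |x|} (R₀(z))² (R₀(z) − R₀(x)) dz = −1/((16π²)²|x|⁴)`. -/
theorem stmt10 (x : EuclideanSpace ℝ (Fin 5)) (hx : x ≠ 0) :
    ∫ z in {z : EuclideanSpace ℝ (Fin 5) | ‖x‖ ≤ ‖z‖}, (R0 z) ^ 2 * (R0 z - R0 x)
      = -(1 / ((16 * π ^ 2) ^ 2 * ‖x‖ ^ 4)) := by
  have ha : 0 < ‖x‖ := norm_pos_iff.mpr hx
  set a : ℝ := ‖x‖ with ha_def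
  have hπ : (0:ℝ) < π := pi_pos
  set f : ℝ → ℝ := (Set.Ici a).indicator
    (fun r => (1/(8*π^2*r^3))^2 * (1/(8*π^2*r^3) - 1/(8*π^2*a^3))) with hf
  have hmeas : MeasurableSet {z : EuclideanSpace ℝ (Fin 5) | a ≤ ‖z‖} :=
    measurableSet_le measurable_const (continuous_norm.measurable)
  have key : ∫ z in {z : EuclideanSpace ℝ (Fin 5) | a ≤ ‖z‖}, (R0 z)^2 * (R0 z - R0 x)
      = ∫ z : EuclideanSpace ℝ (Fin 5), f ‖z‖ := by
    rw [← integral_indicator hmeas]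
    refine integral_congr_ae (Filter.Eventually.of_forall fun z => ?_)
    by_cases h : a ≤ ‖z‖
    · simp [hf, R0, Set.indicator, h, Set.mem_setOf_eq, ← ha_def]
    · simp [hf, R0, Set.indicator, h, Set.mem_setOf_eq, ← ha_def]
  rw [key, integral_fun_norm_addHaar volume f]
  have hdim : Module.finrank ℝ (EuclideanSpace ℝ (Fin 5)) = 5 := by
    simp [finrank_euclideanSpace]
  rw [hdim, measureReal_def, ballvol]
  -- 1D integral
  have hIci : ∫ y in Ioi (0:ℝ), y ^ (5 - 1) • f y = ∫ y in Ioi a, y ^ 4 *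
      ((1/(8*π^2*y^3))^2 * (1/(8*π^2*y^3) - 1/(8*π^2*a^3))) := by
    have h1 : ∀ y : ℝ, y ^ (5-1) • f y = (Set.Ici a).indicator
        (fun y => y ^ 4 * ((1/(8*π^2*y^3))^2 * (1/(8*π^2*y^3) - 1/(8*π^2*a^3)))) y := by
      intro y
      by_cases h : y ∈ Set.Ici a <;> simp [hf, Set.indicator, h, smul_eq_mul]
    simp_rw [h1]
    rw [integral_indicator measurableSet_Ici, Measure.restrict_restrict measurableSet_Ici,
      show Set.Ici a ∩ Ioi 0 = Set.Ici a by
        rw [Set.inter_eq_left]; exact fun y hy => lt_of_lt_of_le ha hy,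
      integral_Ici_eq_integral_Ioi]
  rw [hIci]
  set C : ℝ := 8 * π ^ 2 with hC
  have hCpos : 0 < C := by positivity
  have hcong : ∫ y in Ioi a, y ^ 4 *
      ((1/(C*y^3))^2 * (1/(C*y^3) - 1/(C*a^3)))
      = ∫ y in Ioi a, ((1/C^3) * y ^ (-5 : ℝ) - (1/(C^3*a^3)) * y ^ (-2 : ℝ)) := by
    apply setIntegral_congr_fun measurableSet_Ioi
    intro y hy
    have hy0 : 0 < y := lt_trans ha hy
    have h5 : y ^ (-5:ℝ) = (y^5)⁻¹ := by
      rw [show ((-5:ℝ) = -((5:ℕ):ℝ)) by norm_num, Real.rpow_neg hy0.le, Real.rpow_natCast]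
    have h2 : y ^ (-2:ℝ) = (y^2)⁻¹ := by
      rw [show ((-2:ℝ) = -((2:ℕ):ℝ)) by norm_num, Real.rpow_neg hy0.le, Real.rpow_natCast]
    dsimp only
    rw [h5, h2]
    field_simp
  rw [hcong]
  have hi5 : IntegrableOn (fun y : ℝ => (1/C^3) * y ^ (-5:ℝ)) (Ioi a) :=
    (integrableOn_Ioi_rpow_of_lt (by norm_num) ha).const_mul _
  have hi2 : IntegrableOn (fun y : ℝ => (1/(C^3*a^3)) * y ^ (-2:ℝ)) (Ioi a) :=
    (integrableOn_Ioi_rpow_of_lt (by norm_num) ha).const_mul _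
  rw [integral_sub hi5 hi2, integral_const_mul, integral_const_mul,
    integral_Ioi_rpow_of_lt (by norm_num) ha, integral_Ioi_rpow_of_lt (by norm_num) ha]
  have hr4 : a ^ ((-5:ℝ) + 1) = (a^4)⁻¹ := by
    rw [show ((-5:ℝ)+1 = -(4:ℕ)) by norm_num, Real.rpow_neg ha.le, Real.rpow_natCast]
  have hr1 : a ^ ((-2:ℝ) + 1) = a⁻¹ := by
    rw [show ((-2:ℝ)+1 = -(1:ℕ)) by norm_num, Real.rpow_neg ha.le, Real.rpow_natCast, pow_one]
  rw [hr4, hr1, hC]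
  have ha0 : a ≠ 0 := ha.ne'
  have hπ0 : π ≠ 0 := hπ.ne'
  simp only [nsmul_eq_mul, smul_eq_mul]
  field_simp
  ring
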